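/- Let Γ be the 10-cycle with vertex set {1,...,10} and let d denote graph distance in the cycle. Define A = { {a,b,c} : distances between pairs are {1,1,2} }, B = { {a,b,c} : {1,2,3} }, C = { {a,b,c} : {1,3,4} }, H = { {a,b,c} : {3,3,4} }, and let P_1 = A ∪ B ∪ C ∪ H, P_2 = complement of P_1 in the 3-subsets of {1,...,10}. Then {P_1, P_2} is a perfect 2-coloring of J(10,3) with quotient matrix [[12,9],[9,12]]. -/

import Mathlib

set_option maxRecDepth 1000000


/-- The Johnson graph `J(n,k)`: vertices are the `k`-element subsets of an
`n`-element set, two vertices adjacent when their intersection has `k-1` elements. -/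
def johnsonGraph (n k : ℕ) : SimpleGraph {s : Finset (Fin n) // s.card = k} where
  Adj x y := (x.1 ∩ y.1).card = k - 1 ∧ x ≠ y
  symm := by
    constructor
    intro x y h
    exact ⟨by rw [Finset.inter_comm]; exact h.1, h.2.symm⟩
  loopless := by
    constructor
    intro x h
    exact h.2 rfl

instance (n k : ℕ) : DecidableRel (johnsonGraph n k).Adj :=
  fun x y => inferInstanceAs (Decidable ((x.1 ∩ y.1).card = k - 1 ∧ x ≠ y))

/-- A perfect 2-coloring of a finite graph `G` with quotient matrix
`[[p11, p12], [p21, p22]]`: a partition of the vertices into nonempty parts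
`X1`, `X2` such that every vertex of `Xi` has exactly `p i j` neighbors in `Xj`. -/
def IsPerfect2Coloring {V : Type*} [Fintype V] [DecidableEq V]
    (G : SimpleGraph V) [DecidableRel G.Adj] (X1 X2 : Finset V)
    (p11 p12 p21 p22 : ℕ) : Prop :=
  X1 ∪ X2 = Finset.univ ∧ Disjoint X1 X2 ∧ X1.Nonempty ∧ X2.Nonempty ∧
  (∀ v ∈ X1, (G.neighborFinset v ∩ X1).card = p11 ∧
             (G.neighborFinset v ∩ X2).card = p12) ∧
  (∀ v ∈ X2, (G.neighborFinset v ∩ X1).card = p21 ∧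
             (G.neighborFinset v ∩ X2).card = p22)

/-- Graph distance in the 10-cycle on `Fin 10`. -/
def cdist (x y : Fin 10) : ℕ :=
  min ((x.val + 10 - y.val) % 10) ((y.val + 10 - x.val) % 10)

/-- The multiset of pairwise cycle-distances of a subset of `Fin 10`. -/
def dtype (s : Finset (Fin 10)) : Multiset ℕ :=
  ((s ×ˢ s).filter (fun p : Fin 10 × Fin 10 => p.1 < p.2)).val.map
    (fun p => cdist p.1 p.2)


/-- The 60 triples whose distance type lies in {112,123,134,334}. -/
def L1 : List (Finset (Fin 10)) := [{0,1,2}, {0,1,3}, {0,1,4}, {0,1,7}, {0,1,8}, {0,1,9}, {0,2,3}, {0,2,9}, {0,3,4}, {0,3,6}, {0,3,7}, {0,3,9}, {0,4,7}, {0,6,7}, {0,6,9}, {0,7,8}, {0,7,9}, {0,8,9}, {1,2,3}, {1,2,4}, {1,2,5}, {1,2,8}, {1,2,9}, {1,3,4}, {1,4,5}, {1,4,7}, {1,4,8}, {1,5,8}, {1,7,8}, {1,8,9}, {2,3,4}, {2,3,5}, {2,3,6}, {2,3,9}, {2,4,5}, {2,5,6}, {2,5,8}, {2,5,9}, {2,6,9},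 {2,8,9}, {3,4,5}, {3,4,6}, {3,4,7}, {3,5,6}, {3,6,7}, {3,6,9}, {4,5,6}, {4,5,7}, {4,5,8}, {4,6,7}, {4,7,8}, {5,6,7}, {5,6,8}, {5,6,9}, {5,7,8}, {5,8,9}, {6,7,8}, {6,7,9}, {6,8,9}, {7,8,9}]

/-- The other 60 triples. -/
def L2 : List (Finset (Fin 10)) := [{0,1,5}, {0,1,6}, {0,2,4}, {0,2,5}, {0,2,6}, {0,2,7}, {0,2,8}, {0,3,5}, {0,3,8}, {0,4,5}, {0,4,6}, {0,4,8}, {0,4,9}, {0,5,6}, {0,5,7}, {0,5,8}, {0,5,9}, {0,6,8}, {1,2,6}, {1,2,7}, {1,3,5}, {1,3,6}, {1,3,7}, {1,3,8}, {1,3,9}, {1,4,6}, {1,4,9}, {1,5,6}, {1,5,7}, {1,5,9}, {1,6,7}, {1,6,8}, {1,6,9}, {1,7,9}, {2,3,7}, {2,3,8}, {2,4,6}, {2,4,7}, {2,4,8}, {2,4,9}, {2,5,7}, {2,6,7}, {2,6,8}, {2,7,8}, {2,7,9}, {3,4,8}, {3,4,9}, {3,5,7}, {3,5,8}, {3,5,9},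 {3,6,8}, {3,7,8}, {3,7,9}, {3,8,9}, {4,5,9}, {4,6,8}, {4,6,9}, {4,7,9}, {4,8,9}, {5,7,9}]

def P1' (s : Finset (Fin 10)) : Prop :=
  dtype s = {1, 1, 2} ∨ dtype s = {1, 2, 3} ∨ dtype s = {1, 3, 4} ∨ dtype s = {3, 3, 4}

instance : DecidablePred P1' := fun s => by unfold P1'; infer_instance

abbrev JV := {s : Finset (Fin 10) // s.card = 3}

def L : List (Finset (Fin 10)) := L1 ++ L2

lemma hnd : L.Nodup := by decide

def F : Finset (Finset (Fin 10)) := ⟨(L : Multiset (Finset (Fin 10))), hnd⟩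

lemma mem_F_iff {s : Finset (Fin 10)} : s ∈ F ↔ s ∈ L := by
  exact Multiset.mem_coe

lemma card3 : ∀ s ∈ L, s.card = 3 := by
  have h : (L.all fun t => t.card == 3) = true := by rfl
  intro s hs
  simpa using List.all_eq_true.mp h s hs

lemma cardF : F.card = 120 := rfl

lemma hF : F = Finset.univ.image (Subtype.val : JV → Finset (Fin 10)) := by
  apply Finset.eq_of_subset_of_card_le
  · intro s hs
    exact Finset.mem_image.mpr ⟨⟨s, card3 s (mem_F_iff.mp hs)⟩, Finset.mem_univ _, rfl⟩
  · rw [Finset.card_image_of_injective _ Subtype.val_injective, Finset.card_univ,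
      Fintype.card_finset_len, cardF]
    decide

lemma mem_F (v : JV) : v.1 ∈ F := by
  rw [hF]; exact Finset.mem_image_of_mem _ (Finset.mem_univ v)

lemma bridge (q : Finset (Fin 10) → Prop) [DecidablePred q] :
    ((Finset.univ : Finset JV).filter (fun v => q v.1)).card = (F.filter q).card := by
  rw [hF, Finset.filter_image, Finset.card_image_of_injective _ Subtype.val_injective]

lemma cardFilter (q : Finset (Fin 10) → Prop) [DecidablePred q] :
    (F.filter q).card = L.countP (fun t => decide (q t)) := by
  simp only [F, Finset.filter, Finset.card, Multiset.filter_coe, Multiset.coe_card,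
    List.countP_eq_length_filter]

lemma count_key (v : JV) :
    (((johnsonGraph 10 3).neighborFinset v ∩
        Finset.univ.filter (fun w : JV => P1' w.1)).card =
      L.countP (fun t => decide (P1' t ∧ ((v.1 ∩ t).card = 2 ∧ v.1 ≠ t)))) ∧
    (((johnsonGraph 10 3).neighborFinset v ∩
        Finset.univ.filter (fun w : JV => ¬ P1' w.1)).card =
      L.countP (fun t => decide (¬ P1' t ∧ ((v.1 ∩ t).card = 2 ∧ v.1 ≠ t)))) := by
  constructor <;>
  · rw [SimpleGraph.neighborFinset_eq_filter, ← Finset.filter_and, ← cardFilter, ← bridge]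
    congr 1
    apply Finset.filter_congr
    intro w _
    simp only [johnsonGraph, ne_eq, ← Subtype.ext_iff]
    constructor
    · rintro ⟨⟨h1, h2⟩, h3⟩; exact ⟨h3, h1, h2⟩
    · rintro ⟨h3, h1, h2⟩; exact ⟨⟨h1, h2⟩, h3⟩

lemma bigcheck : (L.all fun s =>
    ((L.countP (fun t => decide (P1' t ∧ ((s ∩ t).card = 2 ∧ s ≠ t))) ==
      if P1' s then 12 else 9) &&
     (L.countP (fun t => decide (¬ P1' t ∧ ((s ∩ t).card = 2 ∧ s ≠ t))) ==
      if P1' s then 9 else 12))) = true := by rfl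

lemma counts (s : Finset (Fin 10)) (hs : s ∈ L) :
    L.countP (fun t => decide (P1' t ∧ ((s ∩ t).card = 2 ∧ s ≠ t))) =
      (if P1' s then 12 else 9) ∧
    L.countP (fun t => decide (¬ P1' t ∧ ((s ∩ t).card = 2 ∧ s ≠ t))) =
      (if P1' s then 9 else 12) := by
  have h := List.all_eq_true.mp bigcheck s hs
  rw [Bool.and_eq_true, beq_iff_eq, beq_iff_eq] at h
  exact h
set_option maxRecDepth 100000 in
theorem orbit_construction_first_coloring :
    IsPerfect2Coloring (johnsonGraph 10 3)
      (Finset.univ.filter (fun v : {s : Finset (Fin 10) // s.card = 3} =>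
        dtype v.1 = {1, 1, 2} ∨ dtype v.1 = {1, 2, 3} ∨
        dtype v.1 = {1, 3, 4} ∨ dtype v.1 = {3, 3, 4}))
      (Finset.univ.filter (fun v : {s : Finset (Fin 10) // s.card = 3} =>
        dtype v.1 = {1, 1, 2} ∨ dtype v.1 = {1, 2, 3} ∨
        dtype v.1 = {1, 3, 4} ∨ dtype v.1 = {3, 3, 4}))ᶜ
      12 9 9 12 := by
  have hX1 : (Finset.univ.filter (fun v : {s : Finset (Fin 10) // s.card = 3} =>
        dtype v.1 = {1, 1, 2} ∨ dtype v.1 = {1, 2, 3} ∨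
        dtype v.1 = {1, 3, 4} ∨ dtype v.1 = {3, 3, 4}))
      = Finset.univ.filter (fun v : JV => P1' v.1) := by
    apply Finset.filter_congr; intro v _; exact Iff.rfl
  rw [hX1, Finset.compl_filter]
  unfold IsPerfect2Coloring
  refine ⟨?_, ?_, ?_, ?_, ?_, ?_⟩
  · rw [← Finset.compl_filter]; exact Finset.union_compl _
  · rw [← Finset.compl_filter]; exact disjoint_compl_right
  · exact ⟨⟨{0,1,2}, by decide⟩, Finset.mem_filter.mpr ⟨Finset.mem_univ _, by decide⟩⟩
  · exact ⟨⟨{0,1,5}, by decide⟩, Finset.mem_filter.mpr ⟨Finset.mem_univ _, by decide⟩⟩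
  · intro v hv
    have hp : P1' v.1 := (Finset.mem_filter.mp hv).2
    obtain ⟨h1, h2⟩ := count_key v
    obtain ⟨c1, c2⟩ := counts v.1 (mem_F_iff.mp (mem_F v))
    rw [if_pos hp] at c1 c2
    exact ⟨h1.trans c1, h2.trans c2⟩
  · intro v hv
    have hp : ¬ P1' v.1 := (Finset.mem_filter.mp hv).2
    obtain ⟨h1, h2⟩ := count_key v
    obtain ⟨c1, c2⟩ := counts v.1 (mem_F_iff.mp (mem_F v))
    rw [if_neg hp] at c1 c2
    exact ⟨h1.trans c1, h2.trans c2⟩
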